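/- Let H be a connected finite simple graph that has no automorphism of order 2 and exactly one vertex v of positive even degree. Let r = min{dist(v,w) : w lies on a cycle of H} (well-defined since H contains a cycle). Then there is a unique path in H from v to each vertex at distance at most r from v; in particular, for any w with dist(v,w) = r there is exactly one path of length r from v to w. -/

import Mathlib

open SimpleGraph Walk

/-- Key auxiliary lemma: if `p` is a shortest path from `u` to `w`, and
`dist v u + p.length ≤ r` (so every vertex strictly before the end of `p` is at
distance `< r` from `v`, hence lies on no cycle, hence all its incident edges
are bridges), then any path `q` from `u` to `w` equals `p`. -/
private lemma stmt_15_aux {V : Type*} [DecidableEq V] {H : SimpleGraph V}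
    (hconn : H.Connected) (v : V) (r : ℕ)
    (hr2 : ∀ w, (∃ c : H.Walk w w, c.IsCycle) → r ≤ H.dist v w) :
    ∀ (n : ℕ) (u w : V) (p : H.Walk u w), p.length = n → p.IsPath →
      p.length = H.dist u w → H.dist v u + p.length ≤ r →
      ∀ q : H.Walk u w, q.IsPath → p = q := by
  intro n
  induction n with
  | zero =>
    intro u w p hn hp hd hle q hq
    cases p with
    | nil =>
      exact ((Walk.isPath_iff_eq_nil (p := q)).mp hq).symm
    | cons h p' => simp at hn
  | succ n ih =>
    intro u w p hn hp hd hle q hq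
    cases p with
    | nil => simp at hn
    | cons h p' =>
      rename_i b
      -- h : H.Adj u b, p' : H.Walk b w
      have hn' : p'.length = n := by simpa using hn
      have hlen : (Walk.cons h p').length = n + 1 := hn
      have hdvu : H.dist v u < r := by
        have := hle
        rw [hlen] at this
        omega
      -- u lies on no cycle
      have hnocyc : ¬ ∃ c : H.Walk u u, c.IsCycle := by
        rintro hc
        exact absurd (hr2 u hc) (by omega)
      -- the edge s(u,b) is a bridge
      have hbridge : H.IsBridge s(u, b) := by
        rw [SimpleGraph.isBridge_iff_adj_and_forall_cycle_notMem h]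
        intro x c hc he
        have hu : u ∈ c.support := c.fst_mem_support_of_mem_edges he
        exact hnocyc ⟨c.rotate u hu, hc.rotate hu⟩
      have hpath' : p'.IsPath ∧ u ∉ p'.support := (Walk.cons_isPath_iff h p').mp hp
      cases q with
      | nil =>
        -- then w = u, but dist u w = n+1 > 0
        rw [H.dist_self] at hd
        simp [hlen] at hd
      | cons h' q' =>
        rename_i c
        have hq' : q'.IsPath ∧ u ∉ q'.support := (Walk.cons_isPath_iff h' q').mp hq
        -- first show c = b
        have hcb : b = c := by
          by_contra hne
          have hub : u ≠ b := H.ne_of_adj h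
          -- build a walk from u to b avoiding the edge s(u,b)
          have havoid : s(u, b) ∉ ((Walk.cons h' q').append p'.reverse).edges := by
            intro hmem
            rw [Walk.edges_append] at hmem
            rcases List.mem_append.mp hmem with hmem | hmem
            · rw [Walk.edges_cons] at hmem
              rcases List.mem_cons.mp hmem with hmem | hmem
              · rw [Sym2.eq_iff] at hmem
                rcases hmem with ⟨-, h2⟩ | ⟨-, h2⟩
                · exact hne h2
                · exact hub h2.symm
              · exact hq'.2 (q'.fst_mem_support_of_mem_edges hmem)
            · rw [Walk.edges_reverse, List.mem_reverse] at hmem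
              exact hpath'.2 (p'.fst_mem_support_of_mem_edges hmem)
          have hreach : (H \ SimpleGraph.fromEdgeSet {s(u, b)}).Reachable u b :=
            SimpleGraph.reachable_delete_edges_iff_exists_walk.mpr
              ⟨(Walk.cons h' q').append p'.reverse, havoid⟩
          exact hbridge hreach
        subst hcb
        -- now q' : H.Walk b w; apply the induction hypothesis
        have hdbw : p'.length = H.dist b w := by
          have h1 : H.dist b w ≤ p'.length := H.dist_le p'
          have h2 : H.dist u b ≤ 1 := by
            have := H.dist_le (Walk.cons h Walk.nil)
            simpa using this
          have h3 : H.dist u w ≤ H.dist u b + H.dist b w := hconn.dist_triangle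
          rw [hlen] at hd
          omega
        have hle' : H.dist v b + p'.length ≤ r := by
          have h2 : H.dist u b ≤ 1 := by
            have := H.dist_le (Walk.cons h Walk.nil)
            simpa using this
          have h3 : H.dist v b ≤ H.dist v u + H.dist u b := hconn.dist_triangle
          rw [hlen] at hle
          omega
        have := ih b w p' hn' hpath'.1 hdbw hle' q' hq'.1
        rw [this]

theorem stmt_15 {V : Type*} [Fintype V] [DecidableEq V] (H : SimpleGraph V)
    [DecidableRel H.Adj]
    (hconn : H.Connected)
    (hinv : ∀ ρ : H ≃g H, (∀ u, ρ (ρ u) = u) → ∀ u, ρ u = u)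
    (v : V) (hv : 0 < H.degree v ∧ Even (H.degree v))
    (huniq : ∀ u, 0 < H.degree u → Even (H.degree u) → u = v)
    (r : ℕ)
    (hr1 : ∃ w, (∃ c : H.Walk w w, c.IsCycle) ∧ H.dist v w = r)
    (hr2 : ∀ w, (∃ c : H.Walk w w, c.IsCycle) → r ≤ H.dist v w) :
    (∀ w, H.dist v w ≤ r → ∀ p q : H.Walk v w, p.IsPath → q.IsPath → p = q) ∧
    (∀ w, H.dist v w = r →
      Nat.card {p : H.Walk v w // p.IsPath ∧ p.length = r} = 1) := by
  have key : ∀ w, H.dist v w ≤ r → ∀ p q : H.Walk v w, p.IsPath → q.IsPath → p = q := by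
    intro w hw p q hp hq
    obtain ⟨p₀, hp₀, hl₀⟩ := hconn.exists_path_of_dist v w
    have hle : H.dist v v + p₀.length ≤ r := by
      rw [H.dist_self, hl₀]
      omega
    have h1 := stmt_15_aux hconn v r hr2 p₀.length v w p₀ rfl hp₀ (by rw [hl₀]) hle p hp
    have h2 := stmt_15_aux hconn v r hr2 p₀.length v w p₀ rfl hp₀ (by rw [hl₀]) hle q hq
    rw [← h1, ← h2]
  refine ⟨key, ?_⟩
  intro w hw
  obtain ⟨p₀, hp₀, hl₀⟩ := hconn.exists_path_of_dist v w
  rw [Nat.card_eq_one_iff_unique]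
  constructor
  · constructor
    rintro ⟨p, hp, -⟩ ⟨q, hq, -⟩
    exact Subtype.ext (key w (le_of_eq hw) p q hp hq)
  · exact ⟨⟨p₀, hp₀, by rw [hl₀, hw]⟩⟩
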